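/- Let G be a finite connected simple graph on vertex set V with |V| ≥ 2, let V₀ ⊆ V be nonempty, let g : V₀ → ℝ, let p ∈ (0,1) and q = 1 − p. Set m = min_{x∈V₀} g(x). Define u₀ : V → ℝ by u₀(x) = g(x) for x ∈ V₀ and u₀(x) = m otherwise, and iteratively u_{n+1}(x) = g(x) for x ∈ V₀ and u_{n+1}(x) = p·max_{y∼x} u_n(y) + q·min_{y∼x} u_n(y) for x ∈ V∖V₀. Then the sequence (u_n) converges pointwise to a function u : V → ℝ which solves the r-biased infinity Laplacian boundary problem: u(x) = g(x) for x ∈ V₀ and u(x) = p·max_{y∼x} u(y) + q·min_{y∼x} u(y) for x ∈ V∖V₀. In particular, a solution of the boundary problem exists. -/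

import Mathlib

open Filter

lemma tendsto_finset_sup' {ι : Type*} (s : Finset ι) (hs : s.Nonempty)
    (f : ℕ → ι → ℝ) (w : ι → ℝ)
    (h : ∀ i ∈ s, Tendsto (fun n => f n i) atTop (nhds (w i))) :
    Tendsto (fun n => s.sup' hs (f n)) atTop (nhds (s.sup' hs w)) := by
  induction hs using Finset.Nonempty.cons_induction with
  | singleton i => simpa using h i (by simp)
  | cons i s hi hs' ih =>
      simp only [Finset.sup'_cons hs']
      exact (h i (by simp)).max (ih (fun j hj => h j (by simp [hj])))

lemma tendsto_finset_inf' {ι : Type*} (s : Finset ι) (hs : s.Nonempty)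
    (f : ℕ → ι → ℝ) (w : ι → ℝ)
    (h : ∀ i ∈ s, Tendsto (fun n => f n i) atTop (nhds (w i))) :
    Tendsto (fun n => s.inf' hs (f n)) atTop (nhds (s.inf' hs w)) := by
  induction hs using Finset.Nonempty.cons_induction with
  | singleton i => simpa using h i (by simp)
  | cons i s hi hs' ih =>
      simp only [Finset.inf'_cons hs']
      exact (h i (by simp)).min (ih (fun j hj => h j (by simp [hj])))

/-- In a connected graph with at least two vertices every vertex has a neighbor. -/
lemma neighborFinset_nonempty_of_connected {V : Type*} [Fintype V]
    (G : SimpleGraph V) [DecidableRel G.Adj]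
    (hc : G.Connected) (h2 : 1 < Fintype.card V) (x : V) :
    (G.neighborFinset x).Nonempty := by
  obtain ⟨y, hy⟩ := Fintype.exists_ne_of_one_lt_card h2 x
  obtain ⟨w⟩ := hc.preconnected x y
  cases w with
  | nil => exact absurd rfl hy
  | cons h _ => exact ⟨_, (G.mem_neighborFinset x _).mpr h⟩

/-- the iteration started from below (`u₀ = g` on `V₀`, `u₀ = m` off `V₀`,
and `u_{n+1} = g` on `V₀`, `u_{n+1}(x) = p ⬝ max_{y∼x} u_n(y) + q ⬝ min_{y∼x} u_n(y)` off
`V₀`) converges pointwise to a solution `u` of the `r`-biased infinity Laplacian boundary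
problem: `u = g` on `V₀` and `u(x) = p ⬝ max_{y∼x} u(y) + q ⬝ min_{y∼x} u(y)` off `V₀`.
In particular, a solution exists. -/
theorem stmt_15 {V : Type*} [Fintype V] [DecidableEq V]
    (G : SimpleGraph V) [DecidableRel G.Adj]
    (hcard : 1 < Fintype.card V) (hconn : G.Connected)
    (V₀ : Finset V) (hV₀ : V₀.Nonempty) (g : V → ℝ)
    (p q : ℝ) (hp : p ∈ Set.Ioo (0 : ℝ) 1) (hq : q = 1 - p)
    (m : ℝ) (hm : m = V₀.inf' hV₀ g)
    (u : ℕ → V → ℝ)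
    (hu0 : ∀ x, u 0 x = if x ∈ V₀ then g x else m)
    (hstep : ∀ n x, u (n + 1) x = if x ∈ V₀ then g x else
      p * (G.neighborFinset x).sup'
            (neighborFinset_nonempty_of_connected G hconn hcard x) (u n)
        + q * (G.neighborFinset x).inf'
            (neighborFinset_nonempty_of_connected G hconn hcard x) (u n)) :
    ∃ w : V → ℝ,
      (∀ x, Filter.Tendsto (fun n => u n x) Filter.atTop (nhds (w x))) ∧
      (∀ x ∈ V₀, w x = g x) ∧
      (∀ x ∉ V₀, w x =
        p * (G.neighborFinset x).sup'
              (neighborFinset_nonempty_of_connected G hconn hcard x) w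
          + q * (G.neighborFinset x).inf'
              (neighborFinset_nonempty_of_connected G hconn hcard x) w) := by
  obtain ⟨hp0, hp1⟩ := hp
  have hq0 : 0 < q := by rw [hq]; linarith
  have hpq : p + q = 1 := by rw [hq]; ring
  set M : ℝ := V₀.sup' hV₀ g with hM
  -- m ≤ u n x ≤ M
  have hmM : ∀ x ∈ V₀, m ≤ g x ∧ g x ≤ M := fun x hx =>
    ⟨hm ▸ Finset.inf'_le _ hx, Finset.le_sup' _ hx⟩
  have hbound : ∀ n x, m ≤ u n x ∧ u n x ≤ M := by
    intro n
    induction n with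
    | zero =>
        intro x
        rw [hu0]
        split
        · exact hmM x ‹_›
        · exact ⟨le_refl m, by
            obtain ⟨x₀, hx₀⟩ := hV₀
            exact le_trans (hmM x₀ hx₀).1 (hmM x₀ hx₀).2⟩
    | succ n ih =>
        intro x
        rw [hstep]
        split
        · exact hmM x ‹_›
        · set S := (G.neighborFinset x).sup'
            (neighborFinset_nonempty_of_connected G hconn hcard x) (u n) with hS
          set I := (G.neighborFinset x).inf'
            (neighborFinset_nonempty_of_connected G hconn hcard x) (u n) with hI
          have h1 : m ≤ I := Finset.le_inf' _ _ fun y _ => (ih y).1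
          have h2 : S ≤ M := Finset.sup'_le _ _ fun y _ => (ih y).2
          have h3 : I ≤ S := by
            obtain ⟨y, hy⟩ := neighborFinset_nonempty_of_connected G hconn hcard x
            exact le_trans (hI ▸ Finset.inf'_le _ hy) (hS ▸ Finset.le_sup' _ hy)
          have hidm : p * m + q * m = m := by rw [hq]; ring
          have hidM : p * M + q * M = M := by rw [hq]; ring
          have e1 := mul_le_mul_of_nonneg_left (h1.trans h3) hp0.le
          have e2 := mul_le_mul_of_nonneg_left h1 hq0.le
          have e3 := mul_le_mul_of_nonneg_left h2 hp0.le
          have e4 := mul_le_mul_of_nonneg_left (h3.trans h2) hq0.le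
          exact ⟨by linarith, by linarith⟩
  -- monotonicity in n
  have hmono : ∀ n x, u n x ≤ u (n + 1) x := by
    intro n
    induction n with
    | zero =>
        intro x
        rw [hu0, hstep]
        split
        · exact le_refl _
        · set S := (G.neighborFinset x).sup'
            (neighborFinset_nonempty_of_connected G hconn hcard x) (u 0) with hS
          set I := (G.neighborFinset x).inf'
            (neighborFinset_nonempty_of_connected G hconn hcard x) (u 0) with hI
          have h1 : m ≤ I := Finset.le_inf' _ _ fun y _ => (hbound 0 y).1
          have h3 : I ≤ S := by
            obtain ⟨y, hy⟩ := neighborFinset_nonempty_of_connected G hconn hcard x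
            exact le_trans (hI ▸ Finset.inf'_le _ hy) (hS ▸ Finset.le_sup' _ hy)
          have hidm : p * m + q * m = m := by rw [hq]; ring
          have e1 := mul_le_mul_of_nonneg_left (h1.trans h3) hp0.le
          have e2 := mul_le_mul_of_nonneg_left h1 hq0.le
          linarith
    | succ n ih =>
        intro x
        rw [hstep, hstep]
        split
        · exact le_refl _
        · have h1 : (G.neighborFinset x).sup'
              (neighborFinset_nonempty_of_connected G hconn hcard x) (u n) ≤
              (G.neighborFinset x).sup'
              (neighborFinset_nonempty_of_connected G hconn hcard x) (u (n + 1)) :=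
            Finset.sup'_mono_fun (fun y _ => ih y)
          have h2 : (G.neighborFinset x).inf'
              (neighborFinset_nonempty_of_connected G hconn hcard x) (u n) ≤
              (G.neighborFinset x).inf'
              (neighborFinset_nonempty_of_connected G hconn hcard x) (u (n + 1)) :=
            Finset.le_inf' _ _ fun y hy => Finset.inf'_le_of_le (f := u n) hy (ih y)
          have e1 := mul_le_mul_of_nonneg_left h1 hp0.le
          have e2 := mul_le_mul_of_nonneg_left h2 hq0.le
          linarith
  have hmono' : ∀ x, Monotone (fun n => u n x) :=
    fun x => monotone_nat_of_le_succ (fun n => hmono n x)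
  have hbdd : ∀ x, BddAbove (Set.range (fun n => u n x)) :=
    fun x => ⟨M, fun _ ⟨n, hn⟩ => hn ▸ (hbound n x).2⟩
  set w : V → ℝ := fun x => ⨆ n, u n x with hw
  have htend : ∀ x, Tendsto (fun n => u n x) atTop (nhds (w x)) :=
    fun x => tendsto_atTop_ciSup (hmono' x) (hbdd x)
  refine ⟨w, htend, ?_, ?_⟩
  · intro x hx
    have : Tendsto (fun _ : ℕ => g x) atTop (nhds (w x)) := by
      have := htend x
      refine this.congr fun n => ?_
      cases n with
      | zero => rw [hu0]; simp [hx]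
      | succ n => rw [hstep]; simp [hx]
    exact tendsto_nhds_unique this tendsto_const_nhds
  · intro x hx
    set s := G.neighborFinset x
    set hs := neighborFinset_nonempty_of_connected G hconn hcard x
    have h1 : Tendsto (fun n => u (n + 1) x) atTop (nhds (w x)) :=
      (htend x).comp (tendsto_add_atTop_nat 1)
    have h2 : Tendsto (fun n => p * s.sup' hs (u n) + q * s.inf' hs (u n)) atTop
        (nhds (p * s.sup' hs w + q * s.inf' hs w)) := by
      exact ((tendsto_finset_sup' s hs u w (fun y _ => htend y)).const_mul p).add
        ((tendsto_finset_inf' s hs u w (fun y _ => htend y)).const_mul q)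
    have h3 : Tendsto (fun n => u (n + 1) x) atTop
        (nhds (p * s.sup' hs w + q * s.inf' hs w)) := by
      refine h2.congr fun n => ?_
      rw [hstep]; simp [hx]; rfl
    exact tendsto_nhds_unique h1 h3
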